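/- Let f_w(x) = W_n φ(W_{n−1} ⋯ φ(W_1 x)⋯) be an n-layer feedforward network with ReLU activation φ and weight matrices W_1,…,W_n, and let f_{w+u} be the same network with perturbed weights W_l + U_l, where ‖U_l‖₂ ≤ (1/n)‖W_l‖₂ for every l. Then for every input x with ‖x‖₂ ≤ B: ‖f_{w+u}(x) − f_w(x)‖₂ ≤ e·B·(∏_{l=1}^n ‖W_l‖₂)·Σ_{l=1}^n ‖U_l‖₂/‖W_l‖₂. -/

import Mathlib

/-- Coordinatewise ReLU. -/
def relu {h : ℕ} (v : Fin h → ℝ) : Fin h → ℝ := fun i => max (v i) 0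

/-- Euclidean norm of a vector. -/
noncomputable def enormVec {h : ℕ} (v : Fin h → ℝ) : ℝ := Real.sqrt (∑ i, v i ^ 2)

/-- Spectral norm of a real matrix. -/
noncomputable def spectralNormMat {m n : ℕ} (A : Matrix (Fin m) (Fin n) ℝ) : ℝ :=
  ‖LinearMap.toContinuousLinearMap (Matrix.toEuclideanLin A)‖

/-- Pre-activation output `f^{(l)}` of an `l`-layer ReLU network:
`f^{(0)}(x) = x`, `f^{(1)}(x) = W₁ x`, `f^{(l+1)}(x) = W_{l+1} φ(f^{(l)}(x))`. -/
noncomputable def preact {h : ℕ} (W : ℕ → Matrix (Fin h) (Fin h) ℝ)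
    (x : Fin h → ℝ) : ℕ → (Fin h → ℝ)
  | 0 => x
  | 1 => (W 1).mulVec x
  | (l + 2) => (W (l + 2)).mulVec (relu (preact W x (l + 1)))

lemma enorm_eq {h : ℕ} (v : Fin h → ℝ) :
    enormVec v = ‖(WithLp.equiv 2 (Fin h → ℝ)).symm v‖ := by
  rw [EuclideanSpace.norm_eq, enormVec]
  simp [sq_abs]

lemma enorm_nonneg' {h : ℕ} (v : Fin h → ℝ) : 0 ≤ enormVec v := Real.sqrt_nonneg _

lemma spectralNormMat_nonneg {m n : ℕ} (A : Matrix (Fin m) (Fin n) ℝ) : 0 ≤ spectralNormMat A :=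
  norm_nonneg _

lemma enorm_mulVec_le {m n : ℕ} (A : Matrix (Fin m) (Fin n) ℝ) (v : Fin n → ℝ) :
    enormVec (A.mulVec v) ≤ spectralNormMat A * enormVec v := by
  rw [enorm_eq, enorm_eq]
  exact (LinearMap.toContinuousLinearMap (Matrix.toEuclideanLin A)).le_opNorm _

lemma spectralNormMat_add_le {m n : ℕ} (A B : Matrix (Fin m) (Fin n) ℝ) :
    spectralNormMat (A + B) ≤ spectralNormMat A + spectralNormMat B := by
  unfold spectralNormMat
  rw [map_add, map_add]
  exact norm_add_le _ _

lemma enormVec_add_le {h : ℕ} (v w : Fin h → ℝ) :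
    enormVec (v + w) ≤ enormVec v + enormVec w := by
  rw [enorm_eq, enorm_eq, enorm_eq]
  exact norm_add_le ((WithLp.equiv 2 (Fin h → ℝ)).symm v) ((WithLp.equiv 2 (Fin h → ℝ)).symm w)

lemma enorm_mono {h : ℕ} (v w : Fin h → ℝ) (hvw : ∀ i, v i ^ 2 ≤ w i ^ 2) :
    enormVec v ≤ enormVec w :=
  Real.sqrt_le_sqrt (Finset.sum_le_sum fun i _ => hvw i)

lemma enorm_relu_sub {h : ℕ} (v w : Fin h → ℝ) :
    enormVec (fun i => relu v i - relu w i) ≤ enormVec (fun i => v i - w i) := by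
  apply enorm_mono
  intro i
  have h1 : |relu v i - relu w i| ≤ |v i - w i| := abs_max_sub_max_le_abs _ _ _
  calc (relu v i - relu w i) ^ 2 = |relu v i - relu w i| ^ 2 := (sq_abs _).symm
    _ ≤ |v i - w i| ^ 2 := pow_le_pow_left₀ (abs_nonneg _) h1 2
    _ = (v i - w i) ^ 2 := sq_abs _

lemma enorm_relu_le {h : ℕ} (v : Fin h → ℝ) : enormVec (relu v) ≤ enormVec v := by
  apply enorm_mono
  intro i
  rcases le_total (v i) 0 with hc | hc
  · rw [show relu v i = 0 from max_eq_right hc]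
    simpa using sq_nonneg (v i)
  · rw [show relu v i = v i from max_eq_left hc]

/-- Growth bound: `‖f^{(l)}(x)‖ ≤ B ∏ ‖W_j‖`. -/
lemma preact_enorm_le {h : ℕ} (W : ℕ → Matrix (Fin h) (Fin h) ℝ)
    (x : Fin h → ℝ) (B : ℝ) (hx : enormVec x ≤ B) :
    ∀ l, enormVec (preact W x l) ≤ B * ∏ j ∈ Finset.Icc 1 l, spectralNormMat (W j) := by
  have hB : 0 ≤ B := le_trans (enorm_nonneg' x) hx
  intro l
  induction l with
  | zero => simpa [preact] using hx
  | succ m ih =>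
    have hprod : ∏ j ∈ Finset.Icc 1 (m + 1), spectralNormMat (W j) =
        (∏ j ∈ Finset.Icc 1 m, spectralNormMat (W j)) * spectralNormMat (W (m + 1)) :=
      Finset.prod_Icc_succ_top (Nat.le_add_left 1 m) _
    have hprodnn : 0 ≤ ∏ j ∈ Finset.Icc 1 m, spectralNormMat (W j) :=
      Finset.prod_nonneg fun j _ => spectralNormMat_nonneg _
    cases m with
    | zero =>
      calc enormVec (preact W x 1) = enormVec ((W 1).mulVec x) := rfl
        _ ≤ spectralNormMat (W 1) * enormVec x := enorm_mulVec_le _ _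
        _ ≤ spectralNormMat (W 1) * B := by
            exact mul_le_mul_of_nonneg_left hx (spectralNormMat_nonneg _)
        _ = B * ∏ j ∈ Finset.Icc 1 1, spectralNormMat (W j) := by simp [mul_comm]
    | succ k =>
      calc enormVec (preact W x (k + 2))
          = enormVec ((W (k + 2)).mulVec (relu (preact W x (k + 1)))) := rfl
        _ ≤ spectralNormMat (W (k + 2)) * enormVec (relu (preact W x (k + 1))) :=
            enorm_mulVec_le _ _
        _ ≤ spectralNormMat (W (k + 2)) * enormVec (preact W x (k + 1)) :=
            mul_le_mul_of_nonneg_left (enorm_relu_le _) (spectralNormMat_nonneg _)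
        _ ≤ spectralNormMat (W (k + 2)) *
              (B * ∏ j ∈ Finset.Icc 1 (k + 1), spectralNormMat (W j)) :=
            mul_le_mul_of_nonneg_left ih (spectralNormMat_nonneg _)
        _ = B * ∏ j ∈ Finset.Icc 1 (k + 2), spectralNormMat (W j) := by
            rw [hprod]; ring

set_option maxHeartbeats 2000000 in
/-- Perturbation bound for ReLU networks (Neyshabur et al.): if each layer
perturbation satisfies `‖U_l‖₂ ≤ (1/n)·‖W_l‖₂`, then for every input `x` with
`‖x‖₂ ≤ B`,
`‖f_{w+u}(x) − f_w(x)‖₂ ≤ e·B·(∏_l ‖W_l‖₂)·Σ_l ‖U_l‖₂/‖W_l‖₂`. -/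
theorem network_perturbation_bound (n h : ℕ) (B : ℝ)
    (W U : ℕ → Matrix (Fin h) (Fin h) ℝ)
    (hWpos : ∀ l ∈ Finset.Icc 1 n, 0 < spectralNormMat (W l))
    (hU : ∀ l ∈ Finset.Icc 1 n,
      spectralNormMat (U l) ≤ (1 / (n : ℝ)) * spectralNormMat (W l))
    (x : Fin h → ℝ) (hx : enormVec x ≤ B) :
    enormVec (fun i => preact (fun l => W l + U l) x n i - preact W x n i) ≤
      Real.exp 1 * B * (∏ l ∈ Finset.Icc 1 n, spectralNormMat (W l)) *
        ∑ l ∈ Finset.Icc 1 n, spectralNormMat (U l) / spectralNormMat (W l) := by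
  have hB : 0 ≤ B := le_trans (enorm_nonneg' x) hx
  set W' : ℕ → Matrix (Fin h) (Fin h) ℝ := fun l => W l + U l with hW'
  set c : ℝ := 1 + 1 / (n : ℝ) with hc
  have hc1 : (1 : ℝ) ≤ c := by
    rw [hc]
    have : (0 : ℝ) ≤ 1 / (n : ℝ) := by positivity
    linarith
  have hc0 : (0 : ℝ) ≤ c := le_trans zero_le_one hc1
  -- the main induction
  have key : ∀ l, l ≤ n →
      enormVec (fun i => preact W' x l i - preact W x l i) ≤
        c ^ l * (B * (∏ j ∈ Finset.Icc 1 l, spectralNormMat (W j)) *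
          ∑ j ∈ Finset.Icc 1 l, spectralNormMat (U j) / spectralNormMat (W j)) := by
    intro l
    induction l with
    | zero =>
      intro _
      simp [preact, enormVec]
    | succ m ih =>
      intro hmn
      have hm1 : (1 : ℕ) ≤ m + 1 := Nat.le_add_left 1 m
      have hmem : m + 1 ∈ Finset.Icc 1 n := Finset.mem_Icc.mpr ⟨hm1, hmn⟩
      have hWm : 0 < spectralNormMat (W (m + 1)) := hWpos _ hmem
      have hUm : spectralNormMat (U (m + 1)) ≤ (1 / (n : ℝ)) * spectralNormMat (W (m + 1)) :=
        hU _ hmem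
      have hW'm : spectralNormMat (W' (m + 1)) ≤ c * spectralNormMat (W (m + 1)) := by
        calc spectralNormMat (W' (m + 1)) ≤
            spectralNormMat (W (m + 1)) + spectralNormMat (U (m + 1)) := spectralNormMat_add_le _ _
          _ ≤ spectralNormMat (W (m + 1)) + (1 / (n : ℝ)) * spectralNormMat (W (m + 1)) := by
              linarith
          _ = c * spectralNormMat (W (m + 1)) := by rw [hc]; ring
      have hprod : ∏ j ∈ Finset.Icc 1 (m + 1), spectralNormMat (W j) =
          (∏ j ∈ Finset.Icc 1 m, spectralNormMat (W j)) * spectralNormMat (W (m + 1)) :=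
        Finset.prod_Icc_succ_top hm1 _
      have hsum : ∑ j ∈ Finset.Icc 1 (m + 1), spectralNormMat (U j) / spectralNormMat (W j) =
          (∑ j ∈ Finset.Icc 1 m, spectralNormMat (U j) / spectralNormMat (W j)) +
            spectralNormMat (U (m + 1)) / spectralNormMat (W (m + 1)) :=
        Finset.sum_Icc_succ_top hm1 _
      have hprodnn : 0 ≤ ∏ j ∈ Finset.Icc 1 m, spectralNormMat (W j) :=
        Finset.prod_nonneg fun j _ => spectralNormMat_nonneg _
      have hsumnn : 0 ≤ ∑ j ∈ Finset.Icc 1 m, spectralNormMat (U j) / spectralNormMat (W j) :=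
        Finset.sum_nonneg fun j hj =>
          div_nonneg (spectralNormMat_nonneg _) (spectralNormMat_nonneg _)
      cases m with
      | zero =>
        -- l = 1 : difference is U 1 * x
        have heq : (fun i => preact W' x 1 i - preact W x 1 i) = (U 1).mulVec x := by
          funext i
          show (W' 1).mulVec x i - (W 1).mulVec x i = (U 1).mulVec x i
          rw [hW']
          simp [Matrix.add_mulVec]
        rw [heq]
        have h1 : enormVec ((U 1).mulVec x) ≤ spectralNormMat (U 1) * enormVec x :=
          enorm_mulVec_le _ _
        have h2 : spectralNormMat (U 1) * enormVec x ≤ spectralNormMat (U 1) * B :=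
          mul_le_mul_of_nonneg_left hx (spectralNormMat_nonneg _)
        have h3 : spectralNormMat (U 1) * B =
            B * spectralNormMat (W 1) * (spectralNormMat (U 1) / spectralNormMat (W 1)) := by
          field_simp
        have h4 : B * spectralNormMat (W 1) * (spectralNormMat (U 1) / spectralNormMat (W 1)) ≤
            c ^ 1 * (B * spectralNormMat (W 1) * (spectralNormMat (U 1) / spectralNormMat (W 1))) := by
          have h0 : 0 ≤ B * spectralNormMat (W 1) * (spectralNormMat (U 1) / spectralNormMat (W 1)) := by
            have := spectralNormMat_nonneg (U 1)
            positivity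
          rw [pow_one]
          exact le_mul_of_one_le_left h0 hc1
        calc enormVec ((U 1).mulVec x) ≤ spectralNormMat (U 1) * B := le_trans h1 h2
          _ = B * spectralNormMat (W 1) * (spectralNormMat (U 1) / spectralNormMat (W 1)) := h3
          _ ≤ c ^ 1 * (B * spectralNormMat (W 1) * (spectralNormMat (U 1) / spectralNormMat (W 1))) := h4
          _ = c ^ 1 * (B * (∏ j ∈ Finset.Icc 1 1, spectralNormMat (W j)) *
              ∑ j ∈ Finset.Icc 1 1, spectralNormMat (U j) / spectralNormMat (W j)) := by simp
      | succ k =>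
        -- l = k + 2
        have ihk := ih (le_trans (Nat.le_succ _) hmn)
        set p' := preact W' x (k + 1) with hp'
        set p := preact W x (k + 1) with hp
        have h5 : (fun i => relu p' i - relu p i) = relu p' - relu p := rfl
        have heq : (fun i => preact W' x (k + 2) i - preact W x (k + 2) i) =
            (W' (k + 2)).mulVec (relu p' - relu p) + (U (k + 2)).mulVec (relu p) := by
          funext i
          show (W' (k + 2)).mulVec (relu p') i - (W (k + 2)).mulVec (relu p) i = _
          have h6 : W' (k + 2) = W (k + 2) + U (k + 2) := rfl
          simp only [h6, Matrix.mulVec_sub, Matrix.add_mulVec, Pi.add_apply, Pi.sub_apply]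
          ring
        rw [heq]
        -- abbreviations
        set a := spectralNormMat (W (k + 2))
        set u := spectralNormMat (U (k + 2))
        set P := ∏ j ∈ Finset.Icc 1 (k + 1), spectralNormMat (W j)
        set S := ∑ j ∈ Finset.Icc 1 (k + 1), spectralNormMat (U j) / spectralNormMat (W j)
        have hPnn : 0 ≤ P := hprodnn
        have hSnn : 0 ≤ S := hsumnn
        have hann : 0 < a := hWm
        have hunn : 0 ≤ u := spectralNormMat_nonneg _
        -- bound first term
        have hD : enormVec (relu p' - relu p) ≤ c ^ (k + 1) * (B * P * S) := by
          rw [← h5]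
          exact le_trans (enorm_relu_sub _ _) ihk
        have ht1 : enormVec ((W' (k + 2)).mulVec (relu p' - relu p)) ≤
            c * a * (c ^ (k + 1) * (B * P * S)) := by
          calc enormVec ((W' (k + 2)).mulVec (relu p' - relu p)) ≤
              spectralNormMat (W' (k + 2)) * enormVec (relu p' - relu p) :=
                enorm_mulVec_le _ _
            _ ≤ (c * a) * (c ^ (k + 1) * (B * P * S)) := by
                exact mul_le_mul hW'm hD (enorm_nonneg' _)
                  (mul_nonneg hc0 (le_of_lt hann))
        -- bound second term
        have ht2 : enormVec ((U (k + 2)).mulVec (relu p)) ≤ u * (B * P) := by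
          calc enormVec ((U (k + 2)).mulVec (relu p)) ≤ u * enormVec (relu p) :=
              enorm_mulVec_le _ _
            _ ≤ u * enormVec p := mul_le_mul_of_nonneg_left (enorm_relu_le _) hunn
            _ ≤ u * (B * P) :=
              mul_le_mul_of_nonneg_left (preact_enorm_le W x B hx (k + 1)) hunn
        have hck : (1 : ℝ) ≤ c ^ (k + 2) := one_le_pow₀ hc1
        have h7 : 0 ≤ B * (P * a) * (u / a) :=
          mul_nonneg (mul_nonneg hB (mul_nonneg hPnn (le_of_lt hann)))
            (div_nonneg hunn (le_of_lt hann))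
        have h8 : B * (P * a) * (u / a) ≤ c ^ (k + 2) * (B * (P * a) * (u / a)) :=
          le_mul_of_one_le_left h7 hck
        calc enormVec ((W' (k + 2)).mulVec (relu p' - relu p) +
              (U (k + 2)).mulVec (relu p))
            ≤ enormVec ((W' (k + 2)).mulVec (relu p' - relu p)) +
              enormVec ((U (k + 2)).mulVec (relu p)) := enormVec_add_le _ _
          _ ≤ c * a * (c ^ (k + 1) * (B * P * S)) + u * (B * P) := add_le_add ht1 ht2
          _ = c ^ (k + 2) * (B * (P * a) * S) + B * (P * a) * (u / a) := by
              have hdm : u / a * a = u := div_mul_cancel₀ u (ne_of_gt hann)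
              linear_combination (-(B * P)) * hdm
          _ ≤ c ^ (k + 2) * (B * (P * a) * S) + c ^ (k + 2) * (B * (P * a) * (u / a)) :=
              add_le_add_right h8 _
          _ = c ^ (k + 2) * (B * (P * a) * (S + u / a)) := by ring
          _ = c ^ (k + 2) * (B * (∏ j ∈ Finset.Icc 1 (k + 2), spectralNormMat (W j)) *
              ∑ j ∈ Finset.Icc 1 (k + 2), spectralNormMat (U j) / spectralNormMat (W j)) := by
              rw [hprod, hsum]
  -- conclude
  have hfinal := key n le_rfl
  have hcn : c ^ n ≤ Real.exp 1 := by
    rcases Nat.eq_zero_or_pos n with hn | hn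
    · subst hn
      simpa using Real.one_le_exp zero_le_one
    · have h1 : c ≤ Real.exp (1 / (n : ℝ)) := by
        have := Real.add_one_le_exp (1 / (n : ℝ))
        linarith
      calc c ^ n ≤ Real.exp (1 / (n : ℝ)) ^ n := pow_le_pow_left₀ hc0 h1 n
        _ = Real.exp ((n : ℝ) * (1 / (n : ℝ))) := (Real.exp_nat_mul _ n).symm
        _ = Real.exp 1 := by
            congr 1
            field_simp
  have hrest : 0 ≤ B * (∏ j ∈ Finset.Icc 1 n, spectralNormMat (W j)) *
      ∑ j ∈ Finset.Icc 1 n, spectralNormMat (U j) / spectralNormMat (W j) := by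
    apply mul_nonneg
    · exact mul_nonneg hB (Finset.prod_nonneg fun j _ => spectralNormMat_nonneg _)
    · exact Finset.sum_nonneg fun j hj =>
        div_nonneg (spectralNormMat_nonneg _) (spectralNormMat_nonneg _)
  calc enormVec (fun i => preact W' x n i - preact W x n i) ≤
      c ^ n * (B * (∏ j ∈ Finset.Icc 1 n, spectralNormMat (W j)) *
        ∑ j ∈ Finset.Icc 1 n, spectralNormMat (U j) / spectralNormMat (W j)) := hfinal
    _ ≤ Real.exp 1 * (B * (∏ j ∈ Finset.Icc 1 n, spectralNormMat (W j)) *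
        ∑ j ∈ Finset.Icc 1 n, spectralNormMat (U j) / spectralNormMat (W j)) :=
        mul_le_mul_of_nonneg_right hcn hrest
    _ = Real.exp 1 * B * (∏ l ∈ Finset.Icc 1 n, spectralNormMat (W l)) *
        ∑ l ∈ Finset.Icc 1 n, spectralNormMat (U l) / spectralNormMat (W l) := by ring
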